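/- Let W be a conference matrix of order n with n ≥ 2, and let k be an odd positive integer such that k² ≤ n−1 < (k+2)². Then the excess satisfies E(W) ≤ n(k² + 2k + n − 1)/(2(k+1)) (an inequality of rational numbers). Moreover, equality holds if and only if either (i) n−1 is a perfect square and W·1_n = k·1_n, or (ii) n−1 is not a perfect square and every entry of W·1_n lies in {k, k+2} (and both values occur). -/

import Mathlib

lemma aux_sumsq (n : ℕ) (hn : 2 ≤ n) (W : Matrix (Fin n) (Fin n) ℤ)
    (horth : W * W.transpose = ((n : ℤ) - 1) • 1) :
    ∑ i, (∑ j, W i j) ^ 2 = (n : ℤ) * ((n : ℤ) - 1) := by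
  have hc : ((n : ℚ) - 1) ≠ 0 := by
    have : (2:ℚ) ≤ (n:ℚ) := by exact_mod_cast hn
    linarith
  set f := Int.castRingHom ℚ with hf
  set W' : Matrix (Fin n) (Fin n) ℚ := W.map f with hW'
  have horth' : W' * W'.transpose = ((n : ℚ) - 1) • 1 := by
    ext i j
    have h := congrFun (congrFun horth i) j
    simp only [Matrix.mul_apply, Matrix.transpose_apply, Matrix.smul_apply,
      Matrix.one_apply, smul_eq_mul] at h ⊢
    have hcast : (∑ l, W' i l * W' j l) = ((∑ l, W i l * W j l : ℤ) : ℚ) := by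
      rw [hW']
      simp only [Matrix.map_apply, hf, Int.coe_castRingHom]
      push_cast
      rfl
    rw [hcast, h]
    split <;> push_cast <;> ring
  have h1 : W' * (((n:ℚ)-1)⁻¹ • W'.transpose) = 1 := by
    rw [Matrix.mul_smul, horth', smul_smul, inv_mul_cancel₀ hc, one_smul]
  have h2 : (((n:ℚ)-1)⁻¹ • W'.transpose) * W' = 1 := mul_eq_one_comm.mp h1
  have hWtW : W'.transpose * W' = ((n:ℚ)-1) • 1 := by
    have := congrArg (fun M => ((n:ℚ)-1) • M) h2
    simp only [Matrix.smul_mul, smul_smul, mul_inv_cancel₀ hc, one_smul] at this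
    exact this
  have key : ∀ j l : Fin n, (∑ i, (W i j : ℚ) * (W i l : ℚ)) =
      if j = l then (n:ℚ) - 1 else 0 := by
    intro j l
    have := congrFun (congrFun hWtW j) l
    simp only [Matrix.mul_apply, Matrix.transpose_apply, Matrix.smul_apply,
      Matrix.one_apply, Matrix.map_apply, smul_eq_mul, mul_ite, mul_one, mul_zero] at this
    simpa [hW', hf] using this
  have hQ : ∑ i, ((∑ j, W i j : ℤ) : ℚ) ^ 2 = (n : ℚ) * ((n : ℚ) - 1) := by
    push_cast
    calc ∑ i, (∑ j, (W i j : ℚ)) ^ 2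
        = ∑ i, ∑ j, ∑ l, (W i j : ℚ) * (W i l : ℚ) := by
          refine Finset.sum_congr rfl fun i _ => ?_
          rw [sq, Finset.sum_mul_sum]
      _ = ∑ j, ∑ i, ∑ l, (W i j : ℚ) * (W i l : ℚ) := Finset.sum_comm
      _ = ∑ j, ∑ l, ∑ i, (W i j : ℚ) * (W i l : ℚ) := by
          exact Finset.sum_congr rfl fun j _ => Finset.sum_comm
      _ = ∑ j : Fin n, ((n:ℚ) - 1) := by
          refine Finset.sum_congr rfl fun j _ => ?_
          simp [key, Finset.sum_ite_eq]
      _ = (n : ℚ) * ((n : ℚ) - 1) := by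
          simp [Finset.sum_const, Finset.card_univ, mul_comm]; ring
  exact_mod_cast hQ

lemma aux_even (n : ℕ) (hn : 2 ≤ n) (W : Matrix (Fin n) (Fin n) ℤ)
    (hdiag : ∀ i, W i i = 0)
    (hoff : ∀ i j, i ≠ j → W i j = 1 ∨ W i j = -1)
    (horth : W * W.transpose = ((n : ℤ) - 1) • 1) :
    Even n := by
  have hW2 : ∀ i j : Fin n, ((W i j : ZMod 2)) = 1 - if i = j then 1 else 0 := by
    intro i j
    rcases eq_or_ne i j with h | h
    · subst h; simp [hdiag]
    · rcases hoff i j h with h' | h' <;> simp [h', h] <;> decide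
  set i₀ : Fin n := ⟨0, by omega⟩
  set i₁ : Fin n := ⟨1, by omega⟩
  have hne : i₀ ≠ i₁ := by simp [i₀, i₁, Fin.ext_iff]
  have h01 : ∑ l, W i₀ l * W i₁ l = 0 := by
    have := congrFun (congrFun horth i₀) i₁
    simpa [Matrix.mul_apply, Matrix.transpose_apply, Matrix.smul_apply,
      Matrix.one_apply, hne] using this
  have h2 : (∑ l, ((W i₀ l : ZMod 2) * (W i₁ l : ZMod 2))) = 0 := by
    have := congrArg (fun x : ℤ => (x : ZMod 2)) h01
    push_cast at this
    exact this
  simp only [hW2] at h2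
  have hexp : ∀ l : Fin n, (1 - if i₀ = l then (1:ZMod 2) else 0) * (1 - if i₁ = l then 1 else 0)
      = 1 - (if i₀ = l then 1 else 0) - (if i₁ = l then 1 else 0)
        + (if i₀ = l then (1:ZMod 2) else 0) * (if i₁ = l then 1 else 0) := by
    intro l; ring
  rw [Finset.sum_congr rfl fun l _ => hexp l] at h2
  have hcross : ∀ l : Fin n, (if i₀ = l then (1:ZMod 2) else 0) * (if i₁ = l then 1 else 0)
      = if i₀ = l then (if i₁ = l then (1:ZMod 2) else 0) else 0 := by
    intro l; split <;> simp
  rw [Finset.sum_congr rfl fun l _ => by rw [hcross l]] at h2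
  simp only [Finset.sum_add_distrib, Finset.sum_sub_distrib, Finset.sum_const,
    Finset.card_univ, Fintype.card_fin, Finset.sum_ite_eq, Finset.mem_univ, if_true,
    nsmul_eq_mul, mul_one] at h2
  have hn2 : (n : ZMod 2) = 0 := by
    have : (n : ZMod 2) - 1 - 1 + 0 = 0 := h2
    have h4 : (1 + 1 : ZMod 2) = 0 := by decide
    linear_combination this + h4
  have := (ZMod.natCast_eq_zero_iff n 2).mp hn2
  exact even_iff_two_dvd.mpr this

lemma aux_odd_row (n : ℕ) (hn : 2 ≤ n) (hneven : Even n) (W : Matrix (Fin n) (Fin n) ℤ)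
    (hdiag : ∀ i, W i i = 0)
    (hoff : ∀ i j, i ≠ j → W i j = 1 ∨ W i j = -1) :
    ∀ i, Odd (∑ j, W i j) := by
  have hW2 : ∀ i j : Fin n, ((W i j : ZMod 2)) = 1 - if i = j then 1 else 0 := by
    intro i j
    rcases eq_or_ne i j with h | h
    · subst h; simp [hdiag]
    · rcases hoff i j h with h' | h' <;> simp [h', h] <;> decide
  intro i
  have hcast : ((∑ j, W i j : ℤ) : ZMod 2) = ∑ j, ((W i j : ZMod 2)) := by push_cast; rfl
  have hn2 : (n : ZMod 2) = 0 := by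
    obtain ⟨m, hm⟩ := hneven
    push_cast [hm]; ring_nf; simp [show ((2:ZMod 2)) = 0 by decide]
  have : ((∑ j, W i j : ℤ) : ZMod 2) = 1 := by
    rw [hcast]
    simp only [hW2]
    rw [Finset.sum_sub_distrib]
    simp [Finset.sum_ite_eq, Finset.card_univ, hn2]
  rw [Int.odd_iff]
  by_contra h
  have hdvd : (2:ℤ) ∣ ∑ j, W i j := by omega
  have h0 : ((∑ j, W i j : ℤ) : ZMod 2) = 0 := by
    rw [ZMod.intCast_zmod_eq_zero_iff_dvd]
    exact_mod_cast hdvd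
  rw [this] at h0
  exact one_ne_zero h0




/-- Let `W` be a conference matrix of order `n ≥ 2` and `k` an odd
positive integer with `k² ≤ n − 1 < (k+2)²`.  Then the excess satisfies
`E(W) ≤ n(k² + 2k + n − 1)/(2(k+1))`, with equality iff either `n − 1` is a
perfect square and all row sums equal `k`, or `n − 1` is not a perfect square
and every row sum lies in `{k, k+2}` with both values occurring. -/
theorem stmt_0 (n : ℕ) (hn : 2 ≤ n) (W : Matrix (Fin n) (Fin n) ℤ)
    (hdiag : ∀ i, W i i = 0)
    (hoff : ∀ i j, i ≠ j → W i j = 1 ∨ W i j = -1)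
    (horth : W * W.transpose = ((n : ℤ) - 1) • 1)
    (k : ℕ) (hkodd : Odd k) (hkpos : 0 < k)
    (hk1 : k ^ 2 ≤ n - 1) (hk2 : n - 1 < (k + 2) ^ 2) :
    ((∑ i, ∑ j, W i j : ℤ) : ℚ) ≤
        (n : ℚ) * ((k : ℚ) ^ 2 + 2 * k + n - 1) / (2 * ((k : ℚ) + 1)) ∧
      (((∑ i, ∑ j, W i j : ℤ) : ℚ) =
          (n : ℚ) * ((k : ℚ) ^ 2 + 2 * k + n - 1) / (2 * ((k : ℚ) + 1)) ↔
        (IsSquare (n - 1) ∧ ∀ i, ∑ j, W i j = (k : ℤ)) ∨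
        (¬ IsSquare (n - 1) ∧
          (∀ i, ∑ j, W i j = (k : ℤ) ∨ ∑ j, W i j = (k : ℤ) + 2) ∧
          (∃ i, ∑ j, W i j = (k : ℤ)) ∧ (∃ i, ∑ j, W i j = (k : ℤ) + 2))) := by
  have hsumsq := aux_sumsq n hn W horth
  have heven : Even n := aux_even n hn W hdiag hoff horth
  have hodd := aux_odd_row n hn heven W hdiag hoff
  set K : ℤ := (k : ℤ) with hK
  have hK1 : 1 ≤ K := by rw [hK]; exact_mod_cast hkpos
  have hKodd : Odd K := by rw [hK]; exact_mod_cast hkodd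
  set S : ℤ := ∑ i, ∑ j, W i j with hS
  -- pointwise nonnegativity
  have hEnn : ∀ i : Fin n, 0 ≤ (∑ j, W i j - K) * (∑ j, W i j - (K + 2)) := by
    intro i
    have hne : ∑ j, W i j ≠ K + 1 := by
      intro h
      have h1 := hodd i
      rw [h] at h1
      rw [Int.odd_iff] at h1 hKodd
      omega
    rcases lt_trichotomy (∑ j, W i j) (K + 1) with h | h | h
    · nlinarith
    · exact absurd h hne
    · nlinarith
  -- sum identity
  have hT : ∑ i, (∑ j, W i j - K) * (∑ j, W i j - (K + 2))
      = (n : ℤ) * ((n : ℤ) - 1) - (2 * K + 2) * S + (n : ℤ) * (K * (K + 2)) := by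
    have hterm : ∀ i : Fin n, (∑ j, W i j - K) * (∑ j, W i j - (K + 2))
        = (∑ j, W i j) ^ 2 - (2 * K + 2) * (∑ j, W i j) + K * (K + 2) := fun i => by ring
    rw [Finset.sum_congr rfl fun i _ => hterm i, Finset.sum_add_distrib,
      Finset.sum_sub_distrib, hsumsq, ← Finset.mul_sum, Finset.sum_const,
      Finset.card_univ, Fintype.card_fin, nsmul_eq_mul]
  have hTnn : 0 ≤ ∑ i, (∑ j, W i j - K) * (∑ j, W i j - (K + 2)) :=
    Finset.sum_nonneg fun i _ => hEnn i
  have hmain : 2 * (K + 1) * S ≤ (n : ℤ) * (K ^ 2 + 2 * K + (n : ℤ) - 1) := by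
    rw [hT] at hTnn; nlinarith
  have hden : (0 : ℚ) < 2 * ((k : ℚ) + 1) := by positivity
  constructor
  · rw [le_div_iff₀ hden]
    have hcast : ((2 * (K + 1) * S : ℤ) : ℚ) ≤ (((n : ℤ) * (K ^ 2 + 2 * K + (n : ℤ) - 1) : ℤ) : ℚ) := by
      exact_mod_cast hmain
    push_cast at hcast
    push_cast [hS, hK] at hcast ⊢
    linarith
  · -- equality chain
    have heq1 : ((S : ℚ) = (n : ℚ) * ((k : ℚ) ^ 2 + 2 * k + n - 1) / (2 * ((k : ℚ) + 1))) ↔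
        2 * (K + 1) * S = (n : ℤ) * (K ^ 2 + 2 * K + (n : ℤ) - 1) := by
      rw [eq_div_iff (ne_of_gt hden)]
      constructor
      · intro h
        have h' : ((2 * (K + 1) * S : ℤ) : ℚ) = (((n : ℤ) * (K ^ 2 + 2 * K + (n : ℤ) - 1) : ℤ) : ℚ) := by
          push_cast
          push_cast [hK] at h ⊢
          linear_combination h
        exact_mod_cast h'
      · intro h
        have h' := congrArg (fun x : ℤ => (x : ℚ)) h
        push_cast [hK] at h'
        linear_combination h'
    have heq2 : (2 * (K + 1) * S = (n : ℤ) * (K ^ 2 + 2 * K + (n : ℤ) - 1)) ↔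
        ∑ i, (∑ j, W i j - K) * (∑ j, W i j - (K + 2)) = 0 := by
      rw [hT]
      constructor <;> intro h <;> linear_combination -h
    have heq3 : (∑ i, (∑ j, W i j - K) * (∑ j, W i j - (K + 2)) = 0) ↔
        ∀ i, (∑ j, W i j - K) * (∑ j, W i j - (K + 2)) = 0 := by
      rw [Finset.sum_eq_zero_iff_of_nonneg fun i _ => hEnn i]
      simp
    have heq4 : (∀ i, (∑ j, W i j - K) * (∑ j, W i j - (K + 2)) = 0) ↔
        ∀ i, ∑ j, W i j = K ∨ ∑ j, W i j = K + 2 := by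
      refine forall_congr' fun i => ?_
      rw [mul_eq_zero, sub_eq_zero, sub_eq_zero]
    rw [heq1, heq2, heq3, heq4]
    -- now the combinatorial dichotomy
    have hoddn1 : Odd (n - 1) := Nat.Even.sub_odd (by omega) heven odd_one
    have hsq_eq : IsSquare (n - 1) → n - 1 = k ^ 2 := by
      rintro ⟨m, hm⟩
      have hmodd : Odd m := by
        rw [hm] at hoddn1
        exact (Nat.odd_mul.mp hoddn1).1
      have h1 : k ≤ m := by nlinarith [hk1, hm]
      have h2 : m < k + 2 := by nlinarith [hk2, hm]
      have hmk : m = k := by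
        rw [Nat.odd_iff] at hmodd hkodd
        omega
      rw [hm, hmk, sq]
    constructor
    · intro hP
      by_cases hs : IsSquare (n - 1)
      · left
        refine ⟨hs, fun i => ?_⟩
        have hnk : (n : ℤ) - 1 = K ^ 2 := by
          have h' := congrArg (fun x : ℕ => (x : ℤ)) (hsq_eq hs)
          push_cast [Nat.cast_sub (by omega : 1 ≤ n)] at h'
          exact_mod_cast h'
        have h0 : ∑ i, ((∑ j, W i j) ^ 2 - K ^ 2) = 0 := by
          rw [Finset.sum_sub_distrib, hsumsq, hnk, Finset.sum_const,
            Finset.card_univ, Fintype.card_fin, nsmul_eq_mul, sub_self]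
        have hnn : ∀ i ∈ Finset.univ, (0 : ℤ) ≤ (∑ j, W i j) ^ 2 - K ^ 2 := by
          intro i _
          rcases hP i with h | h <;> rw [h] <;> nlinarith
        have h1 := (Finset.sum_eq_zero_iff_of_nonneg hnn).mp h0 i (Finset.mem_univ i)
        rcases hP i with h | h
        · exact h
        · exfalso
          rw [h] at h1
          nlinarith
      · right
        refine ⟨hs, hP, ?_, ?_⟩
        · by_contra hno
          push_neg at hno
          have hall : ∀ i, ∑ j, W i j = K + 2 := fun i => (hP i).resolve_left (hno i)
          have hsum2 : ∑ i, (∑ j, W i j) ^ 2 = (n : ℤ) * (K + 2) ^ 2 := by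
            rw [Finset.sum_congr rfl fun i _ => by rw [hall i], Finset.sum_const,
              Finset.card_univ, Fintype.card_fin, nsmul_eq_mul]
          rw [hsumsq] at hsum2
          have hn0 : (n : ℤ) ≠ 0 := by positivity
          have hcancel : (n : ℤ) - 1 = (K + 2) ^ 2 := mul_left_cancel₀ hn0 hsum2
          have hlt : (n : ℤ) - 1 < (K + 2) ^ 2 := by
            have h' : ((n - 1 : ℕ) : ℤ) < (((k + 2) ^ 2 : ℕ) : ℤ) := by exact_mod_cast hk2
            push_cast [Nat.cast_sub (by omega : 1 ≤ n)] at h'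
            exact_mod_cast h'
          linarith
        · by_contra hno
          push_neg at hno
          have hall : ∀ i, ∑ j, W i j = K := fun i => (hP i).resolve_right (hno i)
          have hsum2 : ∑ i, (∑ j, W i j) ^ 2 = (n : ℤ) * K ^ 2 := by
            rw [Finset.sum_congr rfl fun i _ => by rw [hall i], Finset.sum_const,
              Finset.card_univ, Fintype.card_fin, nsmul_eq_mul]
          rw [hsumsq] at hsum2
          have hn0 : (n : ℤ) ≠ 0 := by positivity
          have hcancel : (n : ℤ) - 1 = K ^ 2 := mul_left_cancel₀ hn0 hsum2
          apply hs
          have hnat : n - 1 = k ^ 2 := by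
            have h' : ((n - 1 : ℕ) : ℤ) = ((k ^ 2 : ℕ) : ℤ) := by
              push_cast [Nat.cast_sub (by omega : 1 ≤ n)]
              exact_mod_cast hcancel
            exact_mod_cast h'
          exact ⟨k, by rw [hnat, sq]⟩
    · rintro (⟨hs, hall⟩ | ⟨_, hP, _, _⟩)
      · exact fun i => Or.inl (hall i)
      · exact hP
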